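/- Let B_u, B_v ∈ ℝ^{n×p} be matrices with full column rank whose smallest singular values are at least δ > 0 (i.e., ‖B_w x‖₂ ≥ δ ‖x‖₂ for all x ∈ ℝ^p and w ∈ {u,v}) and whose ℓ²-operator norms satisfy ‖B_u‖₂ ≤ M and ‖B_v‖₂ ≤ M for some M > 0. Define the pseudoinverse B_w⁺ = (B_wᵀ B_w)⁻¹ B_wᵀ and the orthogonal projector A_w = B_w B_w⁺ onto the column space of B_w, for w ∈ {u,v}. Then ‖A_u − A_v‖₂ ≤ (2/δ)(1 + c M²/δ²) ‖B_u − B_v‖₂, where c = (1+√5)/2. -/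

import Mathlib

open Matrix
open scoped Matrix.Norms.L2Operator

/-- The action of a real matrix on vectors of `EuclideanSpace`. -/
noncomputable def mulVecE {m n : Type*} [Fintype m] [Fintype n] [DecidableEq n]
    (A : Matrix m n ℝ) (v : EuclideanSpace ℝ n) : EuclideanSpace ℝ m :=
  Matrix.toEuclideanLin A v

/-- The Moore–Penrose pseudoinverse of a full-column-rank matrix: `B⁺ = (BᵀB)⁻¹Bᵀ`. -/
noncomputable def pinvFCR {n p : ℕ} (B : Matrix (Fin n) (Fin p) ℝ) :
    Matrix (Fin p) (Fin n) ℝ :=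
  (Bᵀ * B)⁻¹ * Bᵀ

open scoped InnerProductSpace

namespace ProjPerturbAux

variable {a b c : ℕ}

lemma mulVecE_mul (A : Matrix (Fin a) (Fin b) ℝ) (B : Matrix (Fin b) (Fin c) ℝ)
    (x : EuclideanSpace ℝ (Fin c)) : mulVecE (A * B) x = mulVecE A (mulVecE B x) := by
  simp [mulVecE, Matrix.toEuclideanLin_apply, Matrix.mulVec_mulVec]

lemma opNorm_le (A : Matrix (Fin a) (Fin b) ℝ) {C : ℝ} (hC : 0 ≤ C)
    (h : ∀ x : EuclideanSpace ℝ (Fin b), ‖mulVecE A x‖ ≤ C * ‖x‖) : ‖A‖ ≤ C := by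
  rw [Matrix.l2_opNorm_def]
  exact ContinuousLinearMap.opNorm_le_bound _ hC fun x => h x

lemma norm_mulVecE_le (A : Matrix (Fin a) (Fin b) ℝ) (x : EuclideanSpace ℝ (Fin b)) :
    ‖mulVecE A x‖ ≤ ‖A‖ * ‖x‖ :=
  A.l2_opNorm_mulVec x

lemma inner_transpose (B : Matrix (Fin a) (Fin b) ℝ) (x : EuclideanSpace ℝ (Fin b))
    (y : EuclideanSpace ℝ (Fin a)) :
    ⟪x, mulVecE Bᵀ y⟫_ℝ = ⟪mulVecE B x, y⟫_ℝ := by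
  have h : (Bᵀ : Matrix (Fin b) (Fin a) ℝ) = Bᴴ :=
    (Matrix.conjTranspose_eq_transpose_of_trivial B).symm
  rw [mulVecE, h, Matrix.toEuclideanLin_conjTranspose_eq_adjoint, LinearMap.adjoint_inner_right]
  rfl

lemma inner_gram (B : Matrix (Fin a) (Fin b) ℝ) (x : EuclideanSpace ℝ (Fin b)) :
    ⟪x, mulVecE (Bᵀ * B) x⟫_ℝ = ‖mulVecE B x‖ ^ 2 := by
  rw [mulVecE_mul, inner_transpose, real_inner_self_eq_norm_sq]

lemma norm_transpose (B : Matrix (Fin a) (Fin b) ℝ) : ‖Bᵀ‖ = ‖B‖ := by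
  rw [show (Bᵀ : Matrix (Fin b) (Fin a) ℝ) = Bᴴ from
    (Matrix.conjTranspose_eq_transpose_of_trivial B).symm]
  exact Matrix.l2_opNorm_conjTranspose B

lemma isUnit_gram (B : Matrix (Fin a) (Fin b) ℝ) {δ : ℝ} (hδ : 0 < δ)
    (hσ : ∀ x : EuclideanSpace ℝ (Fin b), δ * ‖x‖ ≤ ‖mulVecE B x‖) :
    IsUnit (Bᵀ * B) := by
  rw [← Matrix.mulVec_injective_iff_isUnit]
  intro x y hxy
  set d : EuclideanSpace ℝ (Fin b) :=
    (WithLp.equiv 2 (Fin b → ℝ)).symm x - (WithLp.equiv 2 (Fin b → ℝ)).symm y with hd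
  have hGd : mulVecE (Bᵀ * B) d = 0 := by
    rw [hd, mulVecE, map_sub]
    have : mulVecE (Bᵀ * B) ((WithLp.equiv 2 (Fin b → ℝ)).symm x)
        = mulVecE (Bᵀ * B) ((WithLp.equiv 2 (Fin b → ℝ)).symm y) := by
      simp only [mulVecE, WithLp.equiv_symm_apply, Matrix.toEuclideanLin_apply_piLp_toLp, hxy]
    simpa [mulVecE] using sub_eq_zero.mpr this
  have h1 : ‖mulVecE B d‖ ^ 2 = 0 := by
    rw [← inner_gram, hGd, inner_zero_right]
  have h2 := hσ d
  have hb : ‖mulVecE B d‖ = 0 := by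
    have := sq_nonneg ‖mulVecE B d‖
    nlinarith [norm_nonneg (mulVecE B d)]
  have hd0 : d = 0 := by
    have hn : ‖d‖ ≤ 0 := by
      rw [hb] at h2
      nlinarith [norm_nonneg d]
    exact norm_eq_zero.mp (le_antisymm hn (norm_nonneg d))
  have := sub_eq_zero.mp hd0
  exact (WithLp.equiv 2 (Fin b → ℝ)).symm.injective this

lemma pinv_norm_le (B : Matrix (Fin a) (Fin b) ℝ) {δ : ℝ} (hδ : 0 < δ)
    (hσ : ∀ x : EuclideanSpace ℝ (Fin b), δ * ‖x‖ ≤ ‖mulVecE B x‖)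
    (hdet : IsUnit (Bᵀ * B).det) : ‖pinvFCR B‖ ≤ 1 / δ := by
  apply opNorm_le _ (by positivity)
  intro y
  set x := mulVecE (pinvFCR B) y with hx
  have hGx : mulVecE (Bᵀ * B) x = mulVecE Bᵀ y := by
    rw [hx, ← mulVecE_mul, pinvFCR, ← Matrix.mul_assoc, Matrix.mul_nonsing_inv _ hdet,
      Matrix.one_mul]
  have h2 : ‖mulVecE B x‖ ^ 2 = ⟪mulVecE B x, y⟫_ℝ := by
    rw [← inner_gram, hGx, inner_transpose]
  have h3 : ‖mulVecE B x‖ ^ 2 ≤ ‖mulVecE B x‖ * ‖y‖ := h2 ▸ real_inner_le_norm _ _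
  have h4 : ‖mulVecE B x‖ ≤ ‖y‖ := by
    rcases eq_or_ne ‖mulVecE B x‖ 0 with h | h
    · rw [h]; exact norm_nonneg y
    · have hp : 0 < ‖mulVecE B x‖ := (norm_nonneg _).lt_of_ne (Ne.symm h)
      nlinarith
  have h5 : δ * ‖x‖ ≤ ‖y‖ := (hσ x).trans h4
  have hxe : ‖x‖ = (1 / δ) * (δ * ‖x‖) := by field_simp
  rw [hxe]
  gcongr

lemma graminv_norm_le (B : Matrix (Fin a) (Fin b) ℝ) {δ : ℝ} (hδ : 0 < δ)
    (hσ : ∀ x : EuclideanSpace ℝ (Fin b), δ * ‖x‖ ≤ ‖mulVecE B x‖)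
    (hdet : IsUnit (Bᵀ * B).det) : ‖(Bᵀ * B)⁻¹‖ ≤ 1 / δ ^ 2 := by
  apply opNorm_le _ (by positivity)
  intro y
  set x := mulVecE (Bᵀ * B)⁻¹ y with hx
  have hGx : mulVecE (Bᵀ * B) x = y := by
    rw [hx, ← mulVecE_mul, Matrix.mul_nonsing_inv _ hdet]
    simp [mulVecE, Matrix.toEuclideanLin_apply, Matrix.one_mulVec]
  have h2 : ‖mulVecE B x‖ ^ 2 = ⟪x, y⟫_ℝ := by
    rw [← hGx, inner_gram]
  have h3 : ⟪x, y⟫_ℝ ≤ ‖x‖ * ‖y‖ := real_inner_le_norm x y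
  have h1 := hσ x
  have h1' : (δ * ‖x‖) ^ 2 ≤ ‖mulVecE B x‖ ^ 2 :=
    pow_le_pow_left₀ (by positivity) h1 2
  have h4 : δ ^ 2 * ‖x‖ ^ 2 ≤ ‖x‖ * ‖y‖ := by nlinarith [h1', h2, h3]
  have h5 : δ ^ 2 * ‖x‖ ≤ ‖y‖ := by
    rcases eq_or_ne ‖x‖ 0 with h | h
    · rw [h, mul_zero]; exact norm_nonneg y
    · have hp : 0 < ‖x‖ := (norm_nonneg _).lt_of_ne (Ne.symm h)
      nlinarith
  have hxe : ‖x‖ = (1 / δ ^ 2) * (δ ^ 2 * ‖x‖) := by field_simp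
  rw [hxe]
  gcongr

end ProjPerturbAux

open ProjPerturbAux

/-- **Lipschitz perturbation bound for orthogonal projectors onto column spaces.**
If `B_u, B_v` have smallest singular values at least `δ > 0` (so in particular full column
rank) and ℓ²-operator norms at most `M`, then with `A_w = B_w B_w⁺` the orthogonal projectors
onto the column spaces,
`‖A_u - A_v‖₂ ≤ (2/δ)(1 + c M²/δ²) ‖B_u - B_v‖₂` where `c = (1+√5)/2`. -/
theorem projector_perturbation_bound
    {n p : ℕ} (Bu Bv : Matrix (Fin n) (Fin p) ℝ) (δ M : ℝ) (hδ : 0 < δ) (hM : 0 < M)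
    (hσu : ∀ x : EuclideanSpace ℝ (Fin p), δ * ‖x‖ ≤ ‖mulVecE Bu x‖)
    (hσv : ∀ x : EuclideanSpace ℝ (Fin p), δ * ‖x‖ ≤ ‖mulVecE Bv x‖)
    (hMu : ‖Bu‖ ≤ M) (hMv : ‖Bv‖ ≤ M) :
    ‖Bu * pinvFCR Bu - Bv * pinvFCR Bv‖ ≤
      (2 / δ) * (1 + (1 + Real.sqrt 5) / 2 * (M ^ 2 / δ ^ 2)) * ‖Bu - Bv‖ := by
  have h5 : (2 : ℝ) ≤ Real.sqrt 5 := by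
    have h := Real.sqrt_le_sqrt (show (4:ℝ) ≤ 5 by norm_num)
    rwa [show (4:ℝ) = 2 ^ 2 by norm_num, Real.sqrt_sq (by norm_num : (0:ℝ) ≤ 2)] at h
  rcases Nat.eq_zero_or_pos p with hp | hp
  · subst hp
    have hz : ∀ B : Matrix (Fin n) (Fin 0) ℝ, B * pinvFCR B = 0 := by
      intro B
      ext i j
      simp [Matrix.mul_apply]
    rw [hz Bu, hz Bv, sub_zero, norm_zero]
    positivity
  -- p > 0
  have hδM : δ ≤ M := by
    have hx1 : ‖(EuclideanSpace.single (⟨0, hp⟩ : Fin p) (1:ℝ))‖ = 1 := by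
      simp [EuclideanSpace.norm_single]
    have h1 := hσu (EuclideanSpace.single (⟨0, hp⟩ : Fin p) (1:ℝ))
    have h2 := norm_mulVecE_le Bu (EuclideanSpace.single (⟨0, hp⟩ : Fin p) (1:ℝ))
    rw [hx1, mul_one] at h1
    rw [hx1, mul_one] at h2
    linarith
  have hGu : IsUnit (Buᵀ * Bu) := isUnit_gram Bu hδ hσu
  have hGv : IsUnit (Bvᵀ * Bv) := isUnit_gram Bv hδ hσv
  have hdu : IsUnit (Buᵀ * Bu).det := (Matrix.isUnit_iff_isUnit_det _).mp hGu
  have hdv : IsUnit (Bvᵀ * Bv).det := (Matrix.isUnit_iff_isUnit_det _).mp hGv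
  have hPu : ‖pinvFCR Bu‖ ≤ 1 / δ := pinv_norm_le Bu hδ hσu hdu
  have hPv : ‖pinvFCR Bv‖ ≤ 1 / δ := pinv_norm_le Bv hδ hσv hdv
  have hGiu : ‖(Buᵀ * Bu)⁻¹‖ ≤ 1 / δ ^ 2 := graminv_norm_le Bu hδ hσu hdu
  set E := Bu - Bv with hE
  set ΔG := Bvᵀ * Bv - Buᵀ * Bu with hΔG
  have hdiff : ‖ΔG‖ ≤ 2 * M * ‖E‖ := by
    have hid : ΔG = Bvᵀ * (Bv - Bu) + (Bv - Bu)ᵀ * Bu := by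
      rw [hΔG, Matrix.transpose_sub]
      simp only [Matrix.mul_sub, Matrix.sub_mul]
      abel
    have hBvBu : ‖Bv - Bu‖ = ‖E‖ := by rw [hE, norm_sub_rev]
    calc ‖ΔG‖ ≤ ‖Bvᵀ * (Bv - Bu)‖ + ‖(Bv - Bu)ᵀ * Bu‖ := hid ▸ norm_add_le _ _
      _ ≤ ‖Bvᵀ‖ * ‖Bv - Bu‖ + ‖(Bv - Bu)ᵀ‖ * ‖Bu‖ :=
          add_le_add (Matrix.l2_opNorm_mul _ _) (Matrix.l2_opNorm_mul _ _)
      _ = ‖Bv‖ * ‖E‖ + ‖E‖ * ‖Bu‖ := by rw [norm_transpose, norm_transpose, hBvBu]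
      _ ≤ M * ‖E‖ + ‖E‖ * M := by
          gcongr
      _ = 2 * M * ‖E‖ := by ring
  have key : Bu * pinvFCR Bu - Bv * pinvFCR Bv =
      E * pinvFCR Bu + Bv * ((Buᵀ * Bu)⁻¹ * Eᵀ)
        + Bv * ((Buᵀ * Bu)⁻¹ * (ΔG * pinvFCR Bv)) := by
    have e1 : ΔG * pinvFCR Bv = Bvᵀ - (Buᵀ * Bu) * pinvFCR Bv := by
      rw [hΔG, pinvFCR, Matrix.sub_mul, ← Matrix.mul_assoc, Matrix.mul_nonsing_inv _ hdv,
        Matrix.one_mul]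
    have e3 : (Buᵀ * Bu)⁻¹ * (Bvᵀ - (Buᵀ * Bu) * pinvFCR Bv)
        = (Buᵀ * Bu)⁻¹ * Bvᵀ - pinvFCR Bv := by
      rw [Matrix.mul_sub, ← Matrix.mul_assoc, Matrix.nonsing_inv_mul _ hdu, Matrix.one_mul]
    rw [e1, e3, hE]
    simp only [pinvFCR, Matrix.transpose_sub, Matrix.mul_sub, Matrix.sub_mul]
    abel
  have b1 : ‖E * pinvFCR Bu‖ ≤ ‖E‖ * (1 / δ) :=
    (Matrix.l2_opNorm_mul _ _).trans
      (mul_le_mul_of_nonneg_left hPu (norm_nonneg E))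
  have b2 : ‖Bv * ((Buᵀ * Bu)⁻¹ * Eᵀ)‖ ≤ M * ((1 / δ ^ 2) * ‖E‖) := by
    calc ‖Bv * ((Buᵀ * Bu)⁻¹ * Eᵀ)‖ ≤ ‖Bv‖ * ‖(Buᵀ * Bu)⁻¹ * Eᵀ‖ :=
          Matrix.l2_opNorm_mul _ _
      _ ≤ ‖Bv‖ * (‖(Buᵀ * Bu)⁻¹‖ * ‖Eᵀ‖) :=
          mul_le_mul_of_nonneg_left (Matrix.l2_opNorm_mul _ _) (norm_nonneg _)
      _ = ‖Bv‖ * (‖(Buᵀ * Bu)⁻¹‖ * ‖E‖) := by rw [norm_transpose]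
      _ ≤ M * ((1 / δ ^ 2) * ‖E‖) := by
          have h1 : ‖(Buᵀ * Bu)⁻¹‖ * ‖E‖ ≤ (1 / δ ^ 2) * ‖E‖ :=
            mul_le_mul_of_nonneg_right hGiu (norm_nonneg _)
          exact mul_le_mul hMv h1 (by positivity) (le_of_lt hM)
  have b3 : ‖Bv * ((Buᵀ * Bu)⁻¹ * (ΔG * pinvFCR Bv))‖
      ≤ M * ((1 / δ ^ 2) * ((2 * M * ‖E‖) * (1 / δ))) := by
    have hc1 : ‖ΔG * pinvFCR Bv‖ ≤ (2 * M * ‖E‖) * (1 / δ) :=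
      (Matrix.l2_opNorm_mul _ _).trans
        (mul_le_mul hdiff hPv (norm_nonneg _) (by positivity))
    have hc2 : ‖(Buᵀ * Bu)⁻¹ * (ΔG * pinvFCR Bv)‖ ≤ (1 / δ ^ 2) * ((2 * M * ‖E‖) * (1 / δ)) :=
      (Matrix.l2_opNorm_mul _ _).trans
        (mul_le_mul hGiu hc1 (norm_nonneg _) (by positivity))
    exact (Matrix.l2_opNorm_mul _ _).trans
      (mul_le_mul hMv hc2 (norm_nonneg _) (le_of_lt hM))
  have total : ‖Bu * pinvFCR Bu - Bv * pinvFCR Bv‖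
      ≤ (1 / δ + M / δ ^ 2 + 2 * M ^ 2 / δ ^ 3) * ‖E‖ := by
    rw [key]
    calc ‖E * pinvFCR Bu + Bv * ((Buᵀ * Bu)⁻¹ * Eᵀ)
          + Bv * ((Buᵀ * Bu)⁻¹ * (ΔG * pinvFCR Bv))‖
        ≤ ‖E * pinvFCR Bu + Bv * ((Buᵀ * Bu)⁻¹ * Eᵀ)‖
          + ‖Bv * ((Buᵀ * Bu)⁻¹ * (ΔG * pinvFCR Bv))‖ := norm_add_le _ _
      _ ≤ (‖E * pinvFCR Bu‖ + ‖Bv * ((Buᵀ * Bu)⁻¹ * Eᵀ)‖)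
          + ‖Bv * ((Buᵀ * Bu)⁻¹ * (ΔG * pinvFCR Bv))‖ :=
          add_le_add_left (norm_add_le _ _) _
      _ ≤ (‖E‖ * (1 / δ) + M * ((1 / δ ^ 2) * ‖E‖))
          + M * ((1 / δ ^ 2) * ((2 * M * ‖E‖) * (1 / δ))) :=
          add_le_add (add_le_add b1 b2) b3
      _ = (1 / δ + M / δ ^ 2 + 2 * M ^ 2 / δ ^ 3) * ‖E‖ := by
          field_simp
  have hconst : 1 / δ + M / δ ^ 2 + 2 * M ^ 2 / δ ^ 3
      ≤ (2 / δ) * (1 + (1 + Real.sqrt 5) / 2 * (M ^ 2 / δ ^ 2)) := by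
    have hL : 1 / δ + M / δ ^ 2 + 2 * M ^ 2 / δ ^ 3
        = (δ ^ 2 + M * δ + 2 * M ^ 2) / δ ^ 3 := by field_simp
    have hR : (2 / δ) * (1 + (1 + Real.sqrt 5) / 2 * (M ^ 2 / δ ^ 2))
        = (2 * δ ^ 2 + (1 + Real.sqrt 5) * M ^ 2) / δ ^ 3 := by field_simp
    rw [hL, hR]
    apply (div_le_div_iff_of_pos_right (by positivity : (0:ℝ) < δ ^ 3)).mpr
    nlinarith [sq_nonneg (M - δ), sq_nonneg M]
  calc ‖Bu * pinvFCR Bu - Bv * pinvFCR Bv‖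
      ≤ (1 / δ + M / δ ^ 2 + 2 * M ^ 2 / δ ^ 3) * ‖E‖ := total
    _ ≤ (2 / δ) * (1 + (1 + Real.sqrt 5) / 2 * (M ^ 2 / δ ^ 2)) * ‖E‖ :=
        mul_le_mul_of_nonneg_right hconst (norm_nonneg _)
    _ = _ := by rw [hE]
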